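/- Let P₁, P₂ be probability distributions on a finite set 𝒳, and let X₁ⁿ ~ P₁^⊗n and X₂ⁿ ~ P₂^⊗n be independent. Then P[ log(P₁(X₂ⁿ)/P₂(X₂ⁿ)) + log(P₂(X₁ⁿ)/P₁(X₁ⁿ)) ≥ 0 ] ≤ e^{−2n·B(P₁,P₂)}, where B(P₁,P₂) = −log Σ_x √(P₁(x)P₂(x)). -/

import Mathlib

open scoped Classical

lemma sqrt_prod' {ι : Type*} (s : Finset ι) (f : ι → ℝ) (h : ∀ i, 0 ≤ f i) :
    Real.sqrt (∏ i ∈ s, f i) = ∏ i ∈ s, Real.sqrt (f i) := by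
  induction s using Finset.induction_on with
  | empty => simp
  | insert a s hx ih =>
    rw [Finset.prod_insert hx, Finset.prod_insert hx, Real.sqrt_mul (h _), ih]

lemma key_ineq (a b c d : ℝ) (ha : 0 < a) (hb : 0 < b) (hc : 0 < c) (hd : 0 < d) :
    a * d * (if 0 ≤ Real.log (c / d) + Real.log (b / a) then (1:ℝ) else 0)
      ≤ Real.sqrt (a * b) * Real.sqrt (c * d) := by
  split_ifs with h
  · have hlog : Real.log (d * a) ≤ Real.log (c * b) := by
      rw [Real.log_mul hd.ne' ha.ne', Real.log_mul hc.ne' hb.ne']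
      rw [Real.log_div hc.ne' hd.ne', Real.log_div hb.ne' ha.ne'] at h
      linarith
    have hda : d * a ≤ c * b :=
      (Real.log_le_log_iff (by positivity) (by positivity)).mp hlog
    rw [mul_one, ← Real.sqrt_mul (by positivity : (0:ℝ) ≤ a * b)]
    rw [← Real.sqrt_mul_self (by positivity : (0:ℝ) ≤ a * d)]
    apply Real.sqrt_le_sqrt
    have := mul_le_mul_of_nonneg_left hda (mul_pos ha hd).le
    nlinarith
  · rw [mul_zero]
    positivity

theorem stmt_4 {𝒳 : Type*} [Fintype 𝒳] (n : ℕ) (P₁ P₂ : 𝒳 → ℝ)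
    (h₁pos : ∀ x, 0 < P₁ x) (h₂pos : ∀ x, 0 < P₂ x)
    (h₁sum : ∑ x, P₁ x = 1) (h₂sum : ∑ x, P₂ x = 1) :
    (∑ x1 : Fin n → 𝒳, ∑ x2 : Fin n → 𝒳,
      (∏ i, P₁ (x1 i)) * (∏ i, P₂ (x2 i)) *
        (if 0 ≤ Real.log ((∏ i, P₁ (x2 i)) / ∏ i, P₂ (x2 i)) +
              Real.log ((∏ i, P₂ (x1 i)) / ∏ i, P₁ (x1 i)) then (1:ℝ) else 0))
    ≤ Real.exp (-2 * n * (-Real.log (∑ x, Real.sqrt (P₁ x * P₂ x)))) := by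
  set S : ℝ := ∑ x, Real.sqrt (P₁ x * P₂ x) with hSdef
  have hSpos : 0 < S := by
    rw [hSdef]
    have hne : Nonempty 𝒳 := by
      by_contra h
      rw [not_nonempty_iff] at h
      rw [Fintype.sum_empty] at h₁sum
      norm_num at h₁sum
    exact Finset.sum_pos (fun x _ => Real.sqrt_pos.mpr (mul_pos (h₁pos _) (h₂pos _))) Finset.univ_nonempty
  -- RHS = S ^ (2 * n)
  have hRHS : Real.exp (-2 * n * (-Real.log S)) = S ^ (2 * n) := by
    have : (-2 : ℝ) * n * (-Real.log S) = ((2 * n : ℕ) : ℝ) * Real.log S := by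
      push_cast; ring
    rw [this, Real.exp_nat_mul, Real.exp_log hSpos]
  rw [hRHS]
  -- the per-sequence sqrt sum
  have hQ : (∑ x : Fin n → 𝒳, ∏ i, Real.sqrt (P₁ (x i) * P₂ (x i))) = S ^ n := by
    rw [hSdef]
    have : (∑ x : 𝒳, Real.sqrt (P₁ x * P₂ x)) ^ n
        = ∏ _i : Fin n, ∑ x : 𝒳, Real.sqrt (P₁ x * P₂ x) := by
      rw [Finset.prod_const, Finset.card_univ, Fintype.card_fin]
    rw [this, Finset.prod_univ_sum (fun _ => Finset.univ)
      (fun _ x => Real.sqrt (P₁ x * P₂ x)), Fintype.piFinset_univ]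
  have hbound : ∀ x1 x2 : Fin n → 𝒳,
      (∏ i, P₁ (x1 i)) * (∏ i, P₂ (x2 i)) *
        (if 0 ≤ Real.log ((∏ i, P₁ (x2 i)) / ∏ i, P₂ (x2 i)) +
              Real.log ((∏ i, P₂ (x1 i)) / ∏ i, P₁ (x1 i)) then (1:ℝ) else 0)
      ≤ (∏ i, Real.sqrt (P₁ (x1 i) * P₂ (x1 i))) *
        (∏ i, Real.sqrt (P₁ (x2 i) * P₂ (x2 i))) := by
    intro x1 x2
    have e1 : (∏ i, Real.sqrt (P₁ (x1 i) * P₂ (x1 i)))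
        = Real.sqrt ((∏ i, P₁ (x1 i)) * ∏ i, P₂ (x1 i)) := by
      rw [← Finset.prod_mul_distrib, sqrt_prod' _ _ (fun i => (mul_pos (h₁pos _) (h₂pos _)).le)]
    have e2 : (∏ i, Real.sqrt (P₁ (x2 i) * P₂ (x2 i)))
        = Real.sqrt ((∏ i, P₁ (x2 i)) * ∏ i, P₂ (x2 i)) := by
      rw [← Finset.prod_mul_distrib, sqrt_prod' _ _ (fun i => (mul_pos (h₁pos _) (h₂pos _)).le)]
    rw [e1, e2]
    exact key_ineq _ _ _ _
      (Finset.prod_pos (fun i _ => h₁pos _)) (Finset.prod_pos (fun i _ => h₂pos _))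
      (Finset.prod_pos (fun i _ => h₁pos _)) (Finset.prod_pos (fun i _ => h₂pos _))
  calc (∑ x1 : Fin n → 𝒳, ∑ x2 : Fin n → 𝒳,
      (∏ i, P₁ (x1 i)) * (∏ i, P₂ (x2 i)) *
        (if 0 ≤ Real.log ((∏ i, P₁ (x2 i)) / ∏ i, P₂ (x2 i)) +
              Real.log ((∏ i, P₂ (x1 i)) / ∏ i, P₁ (x1 i)) then (1:ℝ) else 0))
      ≤ ∑ x1 : Fin n → 𝒳, ∑ x2 : Fin n → 𝒳,
          (∏ i, Real.sqrt (P₁ (x1 i) * P₂ (x1 i))) *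
          (∏ i, Real.sqrt (P₁ (x2 i) * P₂ (x2 i))) := by
        apply Finset.sum_le_sum (fun x1 _ => Finset.sum_le_sum (fun x2 _ => hbound x1 x2))
    _ = (∑ x : Fin n → 𝒳, ∏ i, Real.sqrt (P₁ (x i) * P₂ (x i))) *
        (∑ x : Fin n → 𝒳, ∏ i, Real.sqrt (P₁ (x i) * P₂ (x i))) := by
        rw [Finset.sum_mul_sum]
    _ = S ^ (2 * n) := by rw [hQ]; ring
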